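/- arXiv:2302.10553 — 2 statements merged into one kernel-verified Lean document; each statement's English description precedes it below -/
import Mathlib

section
/- Let ν ∈ ℝⁿ \ {0}, θ ∈ (0, 1/2), and V ∈ L^∞(ℝ × ℝⁿ). Then for all u ∈ Y_ν^{1/2−θ} and v ∈ Y_ν^θ, ∫_{ℝ×ℝⁿ} |V u conj(v)| ≤ |ν|^{−1/2} (Σ_{α∈ℕ₀²} 2^{|α|/2} ‖V‖_{L^∞(Π_α^ν)}) ‖u‖_{Y_ν^{1/2−θ}} ‖v‖_{Y_ν^θ}. -/
open MeasureTheory Complex ComplexConjugate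
open scoped RealInnerProductSpace ENNReal

noncomputable section

/-- Dyadic time intervals `Υ₀ = {|t| ≤ 1}`, `Υ_j = {2^{j−1} < |t| ≤ 2^j}`. -/
def Ups : ℕ → Set ℝ
  | 0 => {t : ℝ | |t| ≤ 1}
  | (j + 1) => {t : ℝ | (2 : ℝ) ^ j < |t| ∧ |t| ≤ (2 : ℝ) ^ (j + 1)}

/-- Dyadic slabs `Ω_j^ν` in the direction `ν`. -/
def Om {n : ℕ} (ν : EuclideanSpace ℝ (Fin n)) : ℕ → Set (EuclideanSpace ℝ (Fin n))
  | 0 => {x | |(⟪x, ν⟫ : ℝ)| ≤ ‖ν‖}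
  | (j + 1) => {x | (2 : ℝ) ^ j * ‖ν‖ < |(⟪x, ν⟫ : ℝ)| ∧ |(⟪x, ν⟫ : ℝ)| ≤ (2 : ℝ) ^ (j + 1) * ‖ν‖}

/-- The strips `Π_α^ν = Υ_{α₁} × Ω_{α₂}^ν`. -/
def strip {n : ℕ} (ν : EuclideanSpace ℝ (Fin n)) (α : ℕ × ℕ) :
    Set (ℝ × EuclideanSpace ℝ (Fin n)) :=
  Ups α.1 ×ˢ Om ν α.2

/-- The norm of the space `Y_ν^θ`:
`‖u‖ = |ν|^{1/4} sup_α 2^{−|α|θ} ‖u‖_{L²(Π_α^ν)}` (valued in `ℝ≥0∞`). -/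
def Ynorm {n : ℕ} (ν : EuclideanSpace ℝ (Fin n)) (θ : ℝ)
    (u : ℝ × EuclideanSpace ℝ (Fin n) → ℂ) : ℝ≥0∞ :=
  ENNReal.ofReal (‖ν‖ ^ ((1 : ℝ) / 4)) *
    ⨆ α : ℕ × ℕ, ENNReal.ofReal ((2 : ℝ) ^ (-((α.1 + α.2 : ℕ) : ℝ) * θ)) *
      eLpNorm u 2 (volume.restrict (strip ν α))

/-- The norm of the space `X_ν^θ`:
`‖f‖ = |ν|^{−1/4} Σ_α 2^{|α|θ} ‖f‖_{L²(Π_α^ν)}` (valued in `ℝ≥0∞`). -/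
def Xnorm {n : ℕ} (ν : EuclideanSpace ℝ (Fin n)) (θ : ℝ)
    (f : ℝ × EuclideanSpace ℝ (Fin n) → ℂ) : ℝ≥0∞ :=
  ENNReal.ofReal (‖ν‖ ^ (-(1 : ℝ) / 4)) *
    ∑' α : ℕ × ℕ, ENNReal.ofReal ((2 : ℝ) ^ (((α.1 + α.2 : ℕ) : ℝ) * θ)) *
      eLpNorm f 2 (volume.restrict (strip ν α))

/- ### Auxiliary lemmas -/

lemma exists_dyadic (s : ℝ) (hs : 1 < s) : ∃ m : ℕ, (2:ℝ) ^ m < s ∧ s ≤ (2:ℝ) ^ (m+1) := by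
  classical
  obtain ⟨N, hN⟩ := pow_unbounded_of_one_lt s (one_lt_two (α := ℝ))
  have hex : ∃ N : ℕ, s ≤ (2:ℝ) ^ N := ⟨N, hN.le⟩
  have hle : s ≤ (2:ℝ) ^ Nat.find hex := Nat.find_spec hex
  have hM0 : Nat.find hex ≠ 0 := by
    intro h0
    rw [h0] at hle; simp at hle; linarith
  obtain ⟨m, hm⟩ := Nat.exists_eq_succ_of_ne_zero hM0
  refine ⟨m, ?_, ?_⟩
  · have := Nat.find_min hex (m := m) (by omega)
    push_neg at this; exact this
  · rw [hm] at hle; exact hle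

lemma exists_ups (t : ℝ) : ∃ j : ℕ, t ∈ Ups j := by
  rcases le_or_gt |t| 1 with h | h
  · exact ⟨0, h⟩
  · obtain ⟨m, h1, h2⟩ := exists_dyadic |t| h
    exact ⟨m + 1, h1, h2⟩

lemma exists_om {n : ℕ} {ν : EuclideanSpace ℝ (Fin n)} (hν : ν ≠ 0)
    (x : EuclideanSpace ℝ (Fin n)) : ∃ j : ℕ, x ∈ Om ν j := by
  have hν' : (0:ℝ) < ‖ν‖ := norm_pos_iff.2 hν
  rcases le_or_gt |(⟪x, ν⟫ : ℝ)| ‖ν‖ with h | h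
  · exact ⟨0, h⟩
  · obtain ⟨m, h1, h2⟩ := exists_dyadic (|(⟪x, ν⟫ : ℝ)| / ‖ν‖) ((one_lt_div hν').2 h)
    refine ⟨m + 1, ?_, ?_⟩
    · exact (lt_div_iff₀ hν').1 h1
    · exact (div_le_iff₀ hν').1 h2

lemma strip_cover {n : ℕ} {ν : EuclideanSpace ℝ (Fin n)} (hν : ν ≠ 0) :
    (⋃ α : ℕ × ℕ, strip ν α) = Set.univ := by
  ext p
  simp only [Set.mem_iUnion, Set.mem_univ, iff_true]
  obtain ⟨j, hj⟩ := exists_ups p.1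
  obtain ⟨k, hk⟩ := exists_om hν p.2
  exact ⟨(j, k), Set.mem_prod.2 ⟨hj, hk⟩⟩

lemma holder_strip {X : Type*} [MeasurableSpace X] (μ : Measure X) (V u v : X → ℂ)
    (hVt : eLpNorm V ⊤ μ ≠ ⊤)
    (hu : AEStronglyMeasurable u μ) (hv : AEStronglyMeasurable v μ) :
    ∫⁻ p, (‖V p * u p * conj (v p)‖₊ : ℝ≥0∞) ∂μ ≤
      eLpNorm V ⊤ μ * (eLpNorm u 2 μ * eLpNorm v 2 μ) := by
  have h2 : Real.HolderConjugate 2 2 := Real.holderConjugate_iff.mpr ⟨one_lt_two, by norm_num⟩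
  have step1 : ∫⁻ p, (‖V p * u p * conj (v p)‖₊ : ℝ≥0∞) ∂μ ≤
      ∫⁻ p, eLpNormEssSup V μ * ((‖u p‖₊ : ℝ≥0∞) * (‖v p‖₊ : ℝ≥0∞)) ∂μ := by
    refine lintegral_mono_ae ?_
    filter_upwards [ae_le_eLpNormEssSup (f := V) (μ := μ)] with p hp
    calc (‖V p * u p * conj (v p)‖₊ : ℝ≥0∞)
        = (‖V p‖₊ : ℝ≥0∞) * ((‖u p‖₊ : ℝ≥0∞) * (‖v p‖₊ : ℝ≥0∞)) := by
          simp [nnnorm_mul, ENNReal.coe_mul, mul_assoc]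
      _ ≤ _ := mul_le_mul_left hp _
  refine step1.trans ?_
  rw [lintegral_const_mul' _ _ (by rwa [eLpNorm_exponent_top] at hVt)]
  rw [eLpNorm_exponent_top]
  refine mul_le_mul_right ?_ _
  have := ENNReal.lintegral_mul_le_Lp_mul_Lq μ h2 (hu.enorm) (hv.enorm)
  refine le_trans (le_of_eq (by rfl)) (this.trans (le_of_eq ?_))
  rw [eLpNorm_eq_lintegral_rpow_enorm_toReal (p := 2) (by norm_num) (by norm_num),
      eLpNorm_eq_lintegral_rpow_enorm_toReal (p := 2) (by norm_num) (by norm_num)]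
  norm_num

lemma eLpNorm_le_Ynorm {n : ℕ} {ν : EuclideanSpace ℝ (Fin n)} (hν : ν ≠ 0)
    (θ' : ℝ) (u : ℝ × EuclideanSpace ℝ (Fin n) → ℂ) (α : ℕ × ℕ) :
    eLpNorm u 2 (volume.restrict (strip ν α)) ≤
      ENNReal.ofReal (‖ν‖ ^ (-(1:ℝ)/4) * (2:ℝ) ^ (((α.1 + α.2 : ℕ) : ℝ) * θ')) *
        Ynorm ν θ' u := by
  have hν' : (0:ℝ) < ‖ν‖ := norm_pos_iff.2 hν
  set c : ℝ≥0∞ := ENNReal.ofReal (‖ν‖ ^ ((1:ℝ)/4)) with hc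
  set w : ℝ≥0∞ := ENNReal.ofReal ((2:ℝ) ^ (-((α.1 + α.2 : ℕ) : ℝ) * θ')) with hw
  set E := eLpNorm u 2 (volume.restrict (strip ν α)) with hE
  have hcpos : (0:ℝ) < ‖ν‖ ^ ((1:ℝ)/4) := Real.rpow_pos_of_pos hν' _
  have hwpos : (0:ℝ) < (2:ℝ) ^ (-((α.1 + α.2 : ℕ) : ℝ) * θ') := Real.rpow_pos_of_pos two_pos _
  have hcw0 : c * w ≠ 0 :=
    mul_ne_zero (ENNReal.ofReal_pos.2 hcpos).ne' (ENNReal.ofReal_pos.2 hwpos).ne'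
  have hcwt : c * w ≠ ⊤ := ENNReal.mul_ne_top ENNReal.ofReal_ne_top ENNReal.ofReal_ne_top
  have hkey : c * (w * E) ≤ Ynorm ν θ' u := by
    refine mul_le_mul_right ?_ c
    exact le_iSup (fun β : ℕ × ℕ =>
      ENNReal.ofReal ((2:ℝ) ^ (-((β.1 + β.2 : ℕ) : ℝ) * θ')) *
        eLpNorm u 2 (volume.restrict (strip ν β))) α
  have hEle : E ≤ (c * w)⁻¹ * Ynorm ν θ' u := by
    have : (c * w)⁻¹ * (c * (w * E)) = E := by
      rw [← mul_assoc c w E, ← mul_assoc, ENNReal.inv_mul_cancel hcw0 hcwt, one_mul]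
    calc E = (c * w)⁻¹ * (c * (w * E)) := this.symm
      _ ≤ (c * w)⁻¹ * Ynorm ν θ' u := mul_le_mul_right hkey _
  refine hEle.trans (le_of_eq ?_)
  have hinv : (c * w)⁻¹ =
      ENNReal.ofReal (‖ν‖ ^ (-(1:ℝ)/4) * (2:ℝ) ^ (((α.1 + α.2 : ℕ) : ℝ) * θ')) := by
    rw [hc, hw, ← ENNReal.ofReal_mul hcpos.le,
      ← ENNReal.ofReal_inv_of_pos (mul_pos hcpos hwpos)]
    congr 1
    rw [mul_inv, ← Real.rpow_neg hν'.le, ← Real.rpow_neg (by norm_num : (0:ℝ) ≤ 2),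
      show -((1:ℝ)/4) = -(1:ℝ)/4 by norm_num,
      show -(-((α.1 + α.2 : ℕ) : ℝ) * θ') = ((α.1 + α.2 : ℕ) : ℝ) * θ' by ring]
  rw [hinv]

/-- the bilinear estimate
`∫ |V u conj v| ≤ |ν|^{−1/2} (Σ_α 2^{|α|/2} ‖V‖_{L^∞(Π_α^ν)}) ‖u‖_{Y_ν^{1/2−θ}} ‖v‖_{Y_ν^θ}`. -/
theorem stmt8 (n : ℕ) (ν : EuclideanSpace ℝ (Fin n)) (hν : ν ≠ 0)
    (θ : ℝ) (hθ : θ ∈ Set.Ioo (0 : ℝ) (1 / 2))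
    (V u v : ℝ × EuclideanSpace ℝ (Fin n) → ℂ)
    (hV : MemLp V ⊤ (volume : Measure (ℝ × EuclideanSpace ℝ (Fin n))))
    (hu : AEStronglyMeasurable u (volume : Measure (ℝ × EuclideanSpace ℝ (Fin n))))
    (hv : AEStronglyMeasurable v (volume : Measure (ℝ × EuclideanSpace ℝ (Fin n))))
    (hu' : Ynorm ν (1 / 2 - θ) u ≠ ⊤) (hv' : Ynorm ν θ v ≠ ⊤) :
    ∫⁻ p : ℝ × EuclideanSpace ℝ (Fin n), (‖V p * u p * conj (v p)‖₊ : ℝ≥0∞)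
      ≤ ENNReal.ofReal (‖ν‖ ^ (-(1 : ℝ) / 2)) *
          (∑' α : ℕ × ℕ, ENNReal.ofReal ((2 : ℝ) ^ (((α.1 + α.2 : ℕ) : ℝ) / 2)) *
            eLpNorm V ⊤ (volume.restrict (strip ν α))) *
          Ynorm ν (1 / 2 - θ) u * Ynorm ν θ v := by
  have hν' : (0:ℝ) < ‖ν‖ := norm_pos_iff.2 hν
  set Yu := Ynorm ν (1 / 2 - θ) u with hYu
  set Yv := Ynorm ν θ v with hYv
  -- per-strip data
  set S : ℕ × ℕ → ℝ≥0∞ := fun α => eLpNorm V ⊤ (volume.restrict (strip ν α)) with hS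
  have hSt : ∀ α, S α ≠ ⊤ := fun α =>
    ((eLpNorm_mono_measure V Measure.restrict_le_self).trans_lt hV.2).ne
  -- Step 1: break the integral over the strips
  have cover : ∫⁻ p : ℝ × EuclideanSpace ℝ (Fin n), (‖V p * u p * conj (v p)‖₊ : ℝ≥0∞)
      ≤ ∑' α : ℕ × ℕ, ∫⁻ p in strip ν α, (‖V p * u p * conj (v p)‖₊ : ℝ≥0∞) := by
    have h1 : ∫⁻ p : ℝ × EuclideanSpace ℝ (Fin n), (‖V p * u p * conj (v p)‖₊ : ℝ≥0∞)
        = ∫⁻ p in ⋃ α : ℕ × ℕ, strip ν α, (‖V p * u p * conj (v p)‖₊ : ℝ≥0∞) := by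
      rw [strip_cover hν, Measure.restrict_univ]
    rw [h1]
    exact lintegral_iUnion_le _ _
  refine cover.trans ?_
  -- Step 2: per-strip Hölder + Ynorm bounds
  have key : ∀ α : ℕ × ℕ,
      ∫⁻ p in strip ν α, (‖V p * u p * conj (v p)‖₊ : ℝ≥0∞)
        ≤ (ENNReal.ofReal ((2 : ℝ) ^ (((α.1 + α.2 : ℕ) : ℝ) / 2)) * S α) *
            (ENNReal.ofReal (‖ν‖ ^ (-(1:ℝ)/2)) * Yu * Yv) := by
    intro α
    have h1 := holder_strip (volume.restrict (strip ν α)) V u v (hSt α)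
      hu.restrict hv.restrict
    refine h1.trans ?_
    have h2 := eLpNorm_le_Ynorm hν (1/2 - θ) u α
    have h3 := eLpNorm_le_Ynorm hν θ v α
    calc S α * (eLpNorm u 2 (volume.restrict (strip ν α)) *
            eLpNorm v 2 (volume.restrict (strip ν α)))
        ≤ S α * ((ENNReal.ofReal (‖ν‖ ^ (-(1:ℝ)/4) *
              (2:ℝ) ^ (((α.1 + α.2 : ℕ) : ℝ) * (1/2 - θ))) * Yu) *
            (ENNReal.ofReal (‖ν‖ ^ (-(1:ℝ)/4) *
              (2:ℝ) ^ (((α.1 + α.2 : ℕ) : ℝ) * θ)) * Yv)) :=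
          mul_le_mul_right (mul_le_mul' h2 h3) _
      _ = (ENNReal.ofReal (‖ν‖ ^ (-(1:ℝ)/4) * (2:ℝ) ^ (((α.1 + α.2 : ℕ) : ℝ) * (1/2 - θ))) *
            ENNReal.ofReal (‖ν‖ ^ (-(1:ℝ)/4) * (2:ℝ) ^ (((α.1 + α.2 : ℕ) : ℝ) * θ))) *
            (S α * Yu * Yv) := by ring
      _ = (ENNReal.ofReal ((2 : ℝ) ^ (((α.1 + α.2 : ℕ) : ℝ) / 2)) *
            ENNReal.ofReal (‖ν‖ ^ (-(1:ℝ)/2))) * (S α * Yu * Yv) := by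
          rw [← ENNReal.ofReal_mul (by positivity), ← ENNReal.ofReal_mul (by positivity)]
          congr 1
          rw [mul_mul_mul_comm, ← Real.rpow_add hν', ← Real.rpow_add two_pos, mul_comm,
            show ((α.1 + α.2 : ℕ) : ℝ) * (1/2 - θ) + ((α.1 + α.2 : ℕ) : ℝ) * θ
              = ((α.1 + α.2 : ℕ) : ℝ) / 2 by ring,
            show (-(1:ℝ)/4 + -(1:ℝ)/4) = -(1:ℝ)/2 by norm_num]
      _ = (ENNReal.ofReal ((2 : ℝ) ^ (((α.1 + α.2 : ℕ) : ℝ) / 2)) * S α) *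
            (ENNReal.ofReal (‖ν‖ ^ (-(1:ℝ)/2)) * Yu * Yv) := by ring
  refine (ENNReal.tsum_le_tsum key).trans (le_of_eq ?_)
  rw [ENNReal.tsum_mul_right]
  ring

end
end

section
/- Let ν ∈ ℝⁿ \ {0}, θ ∈ (0, 1/2), and V ∈ L^∞(ℝ × ℝⁿ) with Σ_{α∈ℕ₀²} 2^{|α|/2} ‖V‖_{L^∞(Π_α^ν)} < ∞. Then the multiplication operator M_V : u ↦ Vu is bounded from Y_ν^{1/2−θ} to X_ν^θ with operator norm at most |ν|^{−1/2} Σ_{α∈ℕ₀²} 2^{|α|/2} ‖V‖_{L^∞(Π_α^ν)}. -/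
open MeasureTheory Complex ComplexConjugate
open scoped RealInnerProductSpace ENNReal

noncomputable section

/-- the multiplication operator `M_V : u ↦ V u` maps `Y_ν^{1/2−θ}` boundedly
into `X_ν^θ` with operator norm at most `|ν|^{−1/2} Σ_α 2^{|α|/2} ‖V‖_{L^∞(Π_α^ν)}`. -/
theorem stmt9 (n : ℕ) (ν : EuclideanSpace ℝ (Fin n)) (hν : ν ≠ 0)
    (θ : ℝ) (hθ : θ ∈ Set.Ioo (0 : ℝ) (1 / 2))
    (V : ℝ × EuclideanSpace ℝ (Fin n) → ℂ)
    (hV : MemLp V ⊤ (volume : Measure (ℝ × EuclideanSpace ℝ (Fin n))))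
    (hVsum : (∑' α : ℕ × ℕ, ENNReal.ofReal ((2 : ℝ) ^ (((α.1 + α.2 : ℕ) : ℝ) / 2)) *
        eLpNorm V ⊤ (volume.restrict (strip ν α))) ≠ ⊤) :
    ∀ u : ℝ × EuclideanSpace ℝ (Fin n) → ℂ,
      AEStronglyMeasurable u (volume : Measure (ℝ × EuclideanSpace ℝ (Fin n))) →
      Xnorm ν θ (fun p => V p * u p)
        ≤ ENNReal.ofReal (‖ν‖ ^ (-(1 : ℝ) / 2)) *
            (∑' α : ℕ × ℕ, ENNReal.ofReal ((2 : ℝ) ^ (((α.1 + α.2 : ℕ) : ℝ) / 2)) *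
              eLpNorm V ⊤ (volume.restrict (strip ν α))) *
            Ynorm ν (1 / 2 - θ) u := by
  intro u hu
  have hν' : (0:ℝ) < ‖ν‖ := norm_pos_iff.mpr hν
  set S := ∑' α : ℕ × ℕ, ENNReal.ofReal ((2 : ℝ) ^ (((α.1 + α.2 : ℕ) : ℝ) / 2)) *
      eLpNorm V ⊤ (volume.restrict (strip ν α)) with hS
  set T := ⨆ α : ℕ × ℕ, ENNReal.ofReal ((2 : ℝ) ^ (-((α.1 + α.2 : ℕ) : ℝ) * (1/2 - θ))) *
      eLpNorm u 2 (volume.restrict (strip ν α)) with hT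
  have key : ∀ α : ℕ × ℕ,
      ENNReal.ofReal ((2 : ℝ) ^ (((α.1 + α.2 : ℕ) : ℝ) * θ)) *
        eLpNorm (fun p => V p * u p) 2 (volume.restrict (strip ν α))
      ≤ (ENNReal.ofReal ((2 : ℝ) ^ (((α.1 + α.2 : ℕ) : ℝ) / 2)) *
          eLpNorm V ⊤ (volume.restrict (strip ν α))) * T := by
    intro α
    set k : ℝ := ((α.1 + α.2 : ℕ) : ℝ)
    have hmul : eLpNorm (fun p => V p * u p) 2 (volume.restrict (strip ν α))
        ≤ eLpNorm V ⊤ (volume.restrict (strip ν α)) *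
          eLpNorm u 2 (volume.restrict (strip ν α)) :=
      eLpNorm_smul_le_eLpNorm_top_mul_eLpNorm 2 hu.restrict V
    have hexp : (2 : ℝ) ^ (k * θ) = (2 : ℝ) ^ (k / 2) * (2 : ℝ) ^ (-k * (1/2 - θ)) := by
      rw [← Real.rpow_add (by norm_num : (0:ℝ) < 2)]
      ring_nf
    calc ENNReal.ofReal ((2 : ℝ) ^ (k * θ)) *
          eLpNorm (fun p => V p * u p) 2 (volume.restrict (strip ν α))
        ≤ (ENNReal.ofReal ((2 : ℝ) ^ (k / 2)) * ENNReal.ofReal ((2 : ℝ) ^ (-k * (1/2 - θ)))) *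
          (eLpNorm V ⊤ (volume.restrict (strip ν α)) *
            eLpNorm u 2 (volume.restrict (strip ν α))) := by
          rw [hexp, ENNReal.ofReal_mul (Real.rpow_nonneg (by norm_num) _)]
          exact mul_le_mul_right hmul _
      _ = (ENNReal.ofReal ((2 : ℝ) ^ (k / 2)) * eLpNorm V ⊤ (volume.restrict (strip ν α))) *
          (ENNReal.ofReal ((2 : ℝ) ^ (-k * (1/2 - θ))) *
            eLpNorm u 2 (volume.restrict (strip ν α))) := by ring
      _ ≤ _ := mul_le_mul_right (le_iSup (fun α : ℕ × ℕ =>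
            ENNReal.ofReal ((2 : ℝ) ^ (-((α.1 + α.2 : ℕ) : ℝ) * (1/2 - θ))) *
              eLpNorm u 2 (volume.restrict (strip ν α))) α) _
  have hsum : (∑' α : ℕ × ℕ, ENNReal.ofReal ((2 : ℝ) ^ (((α.1 + α.2 : ℕ) : ℝ) * θ)) *
      eLpNorm (fun p => V p * u p) 2 (volume.restrict (strip ν α))) ≤ S * T := by
    rw [hS, ← ENNReal.tsum_mul_right]
    exact ENNReal.tsum_le_tsum key
  have hconst : ENNReal.ofReal (‖ν‖ ^ (-(1 : ℝ) / 4))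
      = ENNReal.ofReal (‖ν‖ ^ (-(1 : ℝ) / 2)) * ENNReal.ofReal (‖ν‖ ^ ((1 : ℝ) / 4)) := by
    rw [← ENNReal.ofReal_mul (Real.rpow_nonneg (norm_nonneg _) _),
      ← Real.rpow_add hν']
    norm_num
  calc Xnorm ν θ (fun p => V p * u p)
      ≤ ENNReal.ofReal (‖ν‖ ^ (-(1 : ℝ) / 4)) * (S * T) :=
        mul_le_mul_right hsum _
    _ = ENNReal.ofReal (‖ν‖ ^ (-(1 : ℝ) / 2)) * S *
        (ENNReal.ofReal (‖ν‖ ^ ((1 : ℝ) / 4)) * T) := by rw [hconst]; ring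
    _ = _ := by rw [Ynorm, hT]

end
end
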